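/- Let 2 ≤ l ≤ n, let λ = (λ_1,…,λ_n) ∈ Γ_l, and let p ≠ q be two indices. Then σ_{l−1}(λ|p) σ_{l−1}(λ|q) − σ_l(λ) σ_{l−2}(λ|pq) = σ_{l−1}(λ|pq)^2 − σ_l(λ|pq) σ_{l−2}(λ|pq), and this quantity is nonnegative. -/

import Mathlib

open Finset

/-- `esymmOn S m lam` is the m-th elementary symmetric polynomial of the
components of `lam` with indices in `S` (zero for `m < 0`, and automatically
zero for `m > |S|`). For `S = {i}ᶜ` this is `σ_m(λ|i)`, etc. -/
noncomputable def esymmOn {n : ℕ} (S : Finset (Fin n)) (m : ℤ) (lam : Fin n → ℝ) : ℝ :=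
  if m < 0 then 0 else ∑ s ∈ S.powersetCard m.toNat, ∏ i ∈ s, lam i

/-- `σ_m(λ)` for the full vector. -/
noncomputable def esymm {n : ℕ} (m : ℤ) (lam : Fin n → ℝ) : ℝ :=
  esymmOn Finset.univ m lam

/-- Garding's cone `Γ_k`. -/
def GammaCone {n : ℕ} (k : ℕ) (lam : Fin n → ℝ) : Prop :=
  ∀ j : ℕ, 1 ≤ j → j ≤ k → 0 < esymm (j : ℤ) lam

open Polynomial


/-- A real polynomial that splits into linear factors (or is zero). -/
def RR (P : ℝ[X]) : Prop :=
  ∃ (a : ℝ) (M : Multiset ℝ), P = C a * (M.map fun r => X - C r).prod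

lemma RR_zero : RR 0 := ⟨0, 0, by simp⟩

lemma RR_C (a : ℝ) : RR (C a) := ⟨a, 0, by simp⟩

lemma RR_mul_C {P : ℝ[X]} (h : RR P) (c : ℝ) : RR (C c * P) := by
  obtain ⟨a, M, rfl⟩ := h
  exact ⟨c * a, M, by rw [← mul_assoc, ← C_mul]⟩

lemma RR_mul_linear {P : ℝ[X]} (h : RR P) (r : ℝ) : RR ((X - C r) * P) := by
  obtain ⟨a, M, rfl⟩ := h
  exact ⟨a, r ::ₘ M, by rw [Multiset.map_cons, Multiset.prod_cons]; ring⟩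

lemma RR_natDegree {a : ℝ} (ha : a ≠ 0) (M : Multiset ℝ) :
    (C a * (M.map fun r => X - C r).prod).natDegree = Multiset.card M := by
  rw [natDegree_C_mul ha, natDegree_multiset_prod_X_sub_C_eq_card]

lemma monic_prod_lin (M : Multiset ℝ) : ((M.map fun r => (X : ℝ[X]) - C r).prod).Monic := by
  exact monic_multiset_prod_of_monic M _ fun r _ => monic_X_sub_C r

lemma RR_ne_zero {a : ℝ} (ha : a ≠ 0) (M : Multiset ℝ) :
    C a * (M.map fun r => X - C r).prod ≠ 0 :=
  mul_ne_zero (by simpa using ha) (monic_prod_lin M).ne_zero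

lemma RR_of_roots_card {P : ℝ[X]} (hP : P ≠ 0) (h : Multiset.card P.roots = P.natDegree) :
    RR P := by
  obtain ⟨Q, hQ⟩ := P.prod_multiset_X_sub_C_dvd
  have hQ0 : Q ≠ 0 := by rintro rfl; simp at hQ; exact hP hQ
  have hd : Q.natDegree = 0 := by
    have h2 := natDegree_mul (monic_prod_lin P.roots).ne_zero hQ0
    rw [← hQ, natDegree_multiset_prod_X_sub_C_eq_card, h] at h2
    omega
  refine ⟨Q.coeff 0, P.roots, ?_⟩
  nth_rewrite 1 [hQ]
  rw [← eq_C_of_natDegree_eq_zero hd, mul_comm]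

lemma RR_roots {a : ℝ} (ha : a ≠ 0) (M : Multiset ℝ) :
    (C a * (M.map fun r => X - C r).prod).roots = M := by
  rw [roots_C_mul _ ha, roots_multiset_prod_X_sub_C]

lemma RR_derivative {P : ℝ[X]} (h : RR P) : RR (derivative P) := by
  obtain ⟨a, M, rfl⟩ := h
  by_cases ha : a = 0
  · subst ha; simp [RR_zero]
  by_cases hM : M = 0
  · subst hM; simp [RR_zero]
  set P := C a * (M.map fun r => X - C r).prod with hP
  have hcard : 0 < Multiset.card M := Multiset.card_pos.mpr hM
  have hdeg : P.natDegree = Multiset.card M := RR_natDegree ha M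
  have hP0 : P ≠ 0 := RR_ne_zero ha M
  have hD0 : derivative P ≠ 0 := by
    intro hc
    have := natDegree_eq_zero_of_derivative_eq_zero hc
    omega
  have h1 : Multiset.card P.roots ≤ Multiset.card (derivative P).roots + 1 :=
    P.card_roots_le_derivative
  rw [RR_roots ha] at h1
  have h2 : Multiset.card (derivative P).roots ≤ (derivative P).natDegree :=
    (derivative P).card_roots' 
  have h3 : (derivative P).natDegree ≤ P.natDegree - 1 := natDegree_derivative_le P
  exact RR_of_roots_card hD0 (by omega)

lemma RR_reverse {P : ℝ[X]} (h : RR P) : RR P.reverse := by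
  obtain ⟨a, M, rfl⟩ := h
  rw [reverse_mul_of_domain, reverse_C]
  have : ∀ (M : Multiset ℝ), RR ((M.map fun r => (X : ℝ[X]) - C r).prod).reverse := by
    intro M
    induction M using Multiset.induction_on with
    | empty =>
      rw [Multiset.map_zero, Multiset.prod_zero, show ((1:ℝ[X])) = C 1 from (map_one C).symm,
        reverse_C]
      exact RR_C 1
    | cons r M ih =>
      rw [Multiset.map_cons, Multiset.prod_cons, reverse_mul_of_domain]
      have hrev : (X - C r).reverse = 1 - C r * X := by
        have hx : (X : ℝ[X]) - C r = X + C (-r) := by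
          rw [map_neg, sub_eq_add_neg]
        rw [hx]
        have hnd : ((X : ℝ[X]) + C (-r)).natDegree = 1 := by
          simpa using natDegree_X_add_C (-r)
        ext n
        rw [coeff_reverse, hnd]
        match n with
        | 0 => simp [revAt_le]
        | 1 => simp [revAt_le, coeff_one]
        | (k+2) =>
          rw [revAt_eq_self_of_lt (by omega)]
          simp [coeff_one, coeff_X, coeff_C]
      rw [hrev]
      by_cases hr : r = 0
      · subst hr; simpa using ih
      · have : (1 : ℝ[X]) - C r * X = C (-r) * (X - C r⁻¹) := by
          rw [mul_sub, ← C_mul, neg_mul, mul_inv_cancel₀ hr, map_neg, map_neg, sub_neg_eq_add,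
            map_one]
          ring
        rw [this, mul_assoc]
        exact RR_mul_C (RR_mul_linear ih r⁻¹) (-r)
  exact RR_mul_C (this M) a

lemma RR_discrim {P : ℝ[X]} (h : RR P) (hd : P.natDegree ≤ 2) :
    4 * (P.coeff 0 * P.coeff 2) ≤ (P.coeff 1) ^ 2 := by
  obtain ⟨a, M, rfl⟩ := h
  by_cases ha : a = 0
  · subst ha; simp
  rw [RR_natDegree ha] at hd
  interval_cases hc : (Multiset.card M)
  · obtain rfl : M = 0 := Multiset.card_eq_zero.mp hc
    simp [coeff_C]
  · obtain ⟨r, rfl⟩ := Multiset.card_eq_one.mp hc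
    simp only [Multiset.map_singleton, Multiset.prod_singleton]
    have hrepr : C a * ((X : ℝ[X]) - C r) = C (-(a*r)) + C a * X := by
      simp only [C_mul, C_neg]; ring
    rw [hrepr]
    simp [coeff_C, coeff_X]
    positivity
  · obtain ⟨r, s, rfl⟩ := Multiset.card_eq_two.mp hc
    have hps : (Multiset.map (fun t => (X:ℝ[X]) - C t) {r, s}).prod = (X - C r) * (X - C s) := by
      rw [Multiset.insert_eq_cons, Multiset.map_cons, Multiset.prod_cons, Multiset.map_singleton,
        Multiset.prod_singleton]
    have hrepr : C a * (((X : ℝ[X]) - C r) * (X - C s))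
        = C (a*(r*s)) + C (-(a*(r+s))) * X + C a * X^2 := by
      simp only [C_mul, C_neg, C_add]; ring
    rw [hps, hrepr]
    simp only [coeff_add, coeff_C_mul, coeff_C, coeff_X, coeff_X_pow]
    norm_num
    nlinarith [sq_nonneg (a * (r - s))]

lemma RR_iterate_derivative {P : ℝ[X]} (h : RR P) (k : ℕ) : RR (derivative^[k] P) := by
  induction k with
  | zero => exact h
  | succ k ih => rw [Function.iterate_succ_apply']; exact RR_derivative ih

lemma multiset_newton (M : Multiset ℝ) (a : ℕ) (hsN : a + 1 + 1 ≤ Multiset.card M) :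
    M.esymm a * M.esymm (a + 2) ≤ (M.esymm (a+1)) ^ 2 := by
  obtain ⟨b, hb⟩ : ∃ b : ℕ, Multiset.card M = a + b + 2 := ⟨Multiset.card M - (a+2), by omega⟩
  set N := Multiset.card M with hN
  set P : ℝ[X] := (M.map fun r => X + C r).prod with hP
  have hform : P = C 1 * ((M.map fun r => -r).map fun r => X - C r).prod := by
    rw [map_one, one_mul, Multiset.map_map]
    apply congrArg
    apply Multiset.map_congr rfl
    intro r _
    simp [sub_neg_eq_add]
  have hRP : RR P := ⟨1, M.map fun r => -r, hform⟩
  have hPdeg : P.natDegree = N := by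
    rw [hform, RR_natDegree one_ne_zero, Multiset.card_map]
  have hPlead : P.coeff N = 1 := by
    have : P.Monic := by
      rw [hform, map_one, one_mul]
      exact monic_prod_lin _
    rw [← hPdeg]
    exact this.coeff_natDegree
  have hPc : ∀ j : ℕ, j ≤ N → P.coeff j = M.esymm (N - j) := fun j hj =>
    Multiset.prod_X_add_C_coeff M hj
  -- first stage: differentiate b times
  set A : ℝ[X] := derivative^[b] P with hA
  have hRA : RR A := RR_iterate_derivative hRP b
  have hAco : ∀ j : ℕ, A.coeff j = ((j + b).descFactorial b : ℝ) * P.coeff (j + b) := by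
    intro j
    rw [hA, Polynomial.coeff_iterate_derivative, nsmul_eq_mul]
  have hAdeg : A.natDegree = a + 2 := by
    apply le_antisymm
    · have h1 := Polynomial.natDegree_iterate_derivative P b
      rw [← hA] at h1
      omega
    · apply le_natDegree_of_ne_zero
      rw [hAco, show a + 2 + b = N by omega, hPlead, mul_one]
      have : N.descFactorial b ≠ 0 := by
        rw [Ne, Nat.descFactorial_eq_zero_iff_lt]
        omega
      exact_mod_cast this
  -- reverse
  set B : ℝ[X] := A.reverse with hB
  have hRB : RR B := RR_reverse hRA
  have hBco : ∀ i : ℕ, i ≤ a + 2 → B.coeff i = A.coeff (a + 2 - i) := by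
    intro i hi
    rw [hB, coeff_reverse, hAdeg, revAt_le hi]
  -- second stage: differentiate a times
  set Q : ℝ[X] := derivative^[a] B with hQ
  have hRQ : RR Q := RR_iterate_derivative hRB a
  have hQdeg : Q.natDegree ≤ 2 := by
    have h1 := Polynomial.natDegree_iterate_derivative B a
    rw [← hQ] at h1
    have h2 : B.natDegree ≤ a + 2 := hAdeg ▸ A.reverse_natDegree_le
    omega
  have hQco : ∀ t : ℕ, Q.coeff t = ((t + a).descFactorial a : ℝ) * B.coeff (t + a) := by
    intro t
    rw [hQ, Polynomial.coeff_iterate_derivative, nsmul_eq_mul]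
  have hc0 : Q.coeff 0 = (a.factorial : ℝ) * (((2+b).descFactorial b : ℝ) * M.esymm a) := by
    rw [hQco, Nat.zero_add, Nat.descFactorial_self, hBco a (by omega),
      show a + 2 - a = 2 from by omega, hAco, hPc (2+b) (by omega),
      show N - (2+b) = a from by omega]
  have hc1 : Q.coeff 1 = ((1+a).descFactorial a : ℝ) *
      (((1+b).descFactorial b : ℝ) * M.esymm (a+1)) := by
    rw [hQco, hBco (1+a) (by omega), show a + 2 - (1+a) = 1 from by omega, hAco,
      hPc (1+b) (by omega), show N - (1+b) = a+1 from by omega]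
  have hc2 : Q.coeff 2 = (((2+a).descFactorial a : ℝ)) *
      ((b.factorial : ℝ) * M.esymm (a+2)) := by
    rw [hQco, hBco (2+a) (by omega), show a + 2 - (2+a) = 0 from by omega, hAco,
      Nat.zero_add, Nat.descFactorial_self, hPc b (by omega),
      show N - b = a+2 from by omega]
  have hdisc := RR_discrim hRQ hQdeg
  rw [hc0, hc1, hc2] at hdisc
  -- descFactorial values
  have d1 : (1+a).descFactorial a = (a+1).factorial := by
    have := Nat.factorial_mul_descFactorial (show a ≤ 1 + a by omega)
    simp only [show 1 + a - a = 1 from by omega, Nat.factorial_one, one_mul] at this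
    rw [this]; ring_nf
  have d1b : (1+b).descFactorial b = (b+1).factorial := by
    have := Nat.factorial_mul_descFactorial (show b ≤ 1 + b by omega)
    simp only [show 1 + b - b = 1 from by omega, Nat.factorial_one, one_mul] at this
    rw [this]; ring_nf
  have d2 : 2 * (2+a).descFactorial a = (a+2).factorial := by
    have := Nat.factorial_mul_descFactorial (show a ≤ 2 + a by omega)
    simp only [show 2 + a - a = 2 from by omega] at this
    rw [show (2:ℕ).factorial = 2 from rfl] at this
    rw [this]; ring_nf
  have d2b : 2 * (2+b).descFactorial b = (b+2).factorial := by
    have := Nat.factorial_mul_descFactorial (show b ≤ 2 + b by omega)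
    simp only [show 2 + b - b = 2 from by omega] at this
    rw [show (2:ℕ).factorial = 2 from rfl] at this
    rw [this]; ring_nf
  -- convert hdisc into factorial form
  set e0 := M.esymm a
  set e1 := M.esymm (a+1)
  set e2 := M.esymm (a+2)
  have key : ((a.factorial : ℝ) * b.factorial * (a+2).factorial * (b+2).factorial) * (e0 * e2)
      ≤ (((a+1).factorial : ℝ) * (b+1).factorial) ^ 2 * e1 ^ 2 := by
    have h2a : ((a+2).factorial : ℝ) = 2 * ((2+a).descFactorial a : ℝ) := by
      exact_mod_cast (congrArg (fun x : ℕ => (x : ℝ)) d2).symm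
    have h2b : ((b+2).factorial : ℝ) = 2 * ((2+b).descFactorial b : ℝ) := by
      exact_mod_cast (congrArg (fun x : ℕ => (x : ℝ)) d2b).symm
    calc ((a.factorial : ℝ) * b.factorial * (a+2).factorial * (b+2).factorial) * (e0 * e2)
        = 4 * ((a.factorial : ℝ) * (((2+b).descFactorial b : ℝ) * e0) *
            (((2+a).descFactorial a : ℝ) * ((b.factorial : ℝ) * e2))) := by
          rw [h2a, h2b]; ring
      _ ≤ (((1+a).descFactorial a : ℝ) * (((1+b).descFactorial b : ℝ) * e1)) ^ 2 := hdisc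
      _ = (((a+1).factorial : ℝ) * (b+1).factorial) ^ 2 * e1 ^ 2 := by
          rw [d1, d1b]; ring
  -- conclude
  by_cases hsign : e0 * e2 ≤ 0
  · calc e0 * e2 ≤ 0 := hsign
      _ ≤ e1 ^ 2 := sq_nonneg e1
  push_neg at hsign
  have hfac : (((a+1).factorial : ℝ) * (b+1).factorial) ^ 2
      ≤ (a.factorial : ℝ) * b.factorial * (a+2).factorial * (b+2).factorial := by
    have hn : ((a+1).factorial * (b+1).factorial) ^ 2
        ≤ a.factorial * b.factorial * ((a+2).factorial * (b+2).factorial) := by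
      have ea : (a+1).factorial * (a+1).factorial ≤ a.factorial * (a+2).factorial := by
        rw [Nat.factorial_succ (a+1), Nat.factorial_succ a]
        calc (a+1) * a.factorial * (a+1).factorial ≤ (a+2) * a.factorial * (a+1).factorial := by
              apply Nat.mul_le_mul_right
              apply Nat.mul_le_mul_right
              omega
          _ = a.factorial * ((a+2) * (a+1).factorial) := by ring
      have eb : (b+1).factorial * (b+1).factorial ≤ b.factorial * (b+2).factorial := by
        rw [Nat.factorial_succ (b+1), Nat.factorial_succ b]
        calc (b+1) * b.factorial * (b+1).factorial ≤ (b+2) * b.factorial * (b+1).factorial := by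
              apply Nat.mul_le_mul_right
              apply Nat.mul_le_mul_right
              omega
          _ = b.factorial * ((b+2) * (b+1).factorial) := by ring
      calc ((a+1).factorial * (b+1).factorial) ^ 2
          = ((a+1).factorial * (a+1).factorial) * ((b+1).factorial * (b+1).factorial) := by ring
        _ ≤ (a.factorial * (a+2).factorial) * (b.factorial * (b+2).factorial) :=
            Nat.mul_le_mul ea eb
        _ = a.factorial * b.factorial * ((a+2).factorial * (b+2).factorial) := by ring
    calc (((a+1).factorial : ℝ) * (b+1).factorial) ^ 2
        = (((a+1).factorial * (b+1).factorial) ^ 2 : ℕ) := by push_cast; ring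
      _ ≤ ((a.factorial * b.factorial * ((a+2).factorial * (b+2).factorial) : ℕ) : ℝ) := by
          exact_mod_cast hn
      _ = (a.factorial : ℝ) * b.factorial * (a+2).factorial * (b+2).factorial := by
          push_cast; ring
  have hposF : (0:ℝ) < (((a+1).factorial : ℝ) * (b+1).factorial) ^ 2 := by
    positivity
  have := calc (((a+1).factorial : ℝ) * (b+1).factorial) ^ 2 * (e0 * e2)
      ≤ ((a.factorial : ℝ) * b.factorial * (a+2).factorial * (b+2).factorial) * (e0 * e2) :=
        mul_le_mul_of_nonneg_right hfac (le_of_lt hsign)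
    _ ≤ (((a+1).factorial : ℝ) * (b+1).factorial) ^ 2 * e1 ^ 2 := key
  exact le_of_mul_le_mul_left this hposF

lemma esymmOn_coe {n : ℕ} (S : Finset (Fin n)) (k : ℕ) (lam : Fin n → ℝ) :
    esymmOn S (k : ℤ) lam = ∑ s ∈ S.powersetCard k, ∏ i ∈ s, lam i := by
  rw [esymmOn, if_neg (by omega), Int.toNat_natCast]

lemma esymmOn_neg {n : ℕ} (S : Finset (Fin n)) {m : ℤ} (hm : m < 0) (lam : Fin n → ℝ) :
    esymmOn S m lam = 0 := by
  rw [esymmOn, if_pos hm]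

lemma esymmOn_insert {n : ℕ} {S : Finset (Fin n)} {i : Fin n} (hi : i ∉ S) (m : ℤ)
    (lam : Fin n → ℝ) :
    esymmOn (insert i S) m lam = esymmOn S m lam + lam i * esymmOn S (m - 1) lam := by
  rcases lt_or_ge m 0 with hm | hm
  · rw [esymmOn_neg _ hm, esymmOn_neg _ hm, esymmOn_neg _ (by omega), mul_zero, add_zero]
  obtain ⟨k, rfl⟩ : ∃ k : ℕ, m = (k : ℤ) := ⟨m.toNat, (Int.toNat_of_nonneg hm).symm⟩
  match k with
  | 0 =>
    have h1 : esymmOn S (((0:ℕ):ℤ) - 1) lam = 0 := esymmOn_neg S (by norm_num) lam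
    rw [h1, mul_zero, add_zero, esymmOn_coe, esymmOn_coe]
    simp
  | (k+1) =>
    rw [show (((k+1:ℕ)):ℤ) - 1 = ((k:ℕ) : ℤ) by push_cast; ring, esymmOn_coe, esymmOn_coe,
      esymmOn_coe, Finset.powersetCard_succ_insert hi]
    rw [Finset.sum_union ?hdisj]
    case hdisj =>
      rw [Finset.disjoint_right]
      intro t ht ht'
      rw [Finset.mem_image] at ht
      obtain ⟨u, hu, rfl⟩ := ht
      rw [Finset.mem_powersetCard] at ht'
      exact hi (ht'.1 (Finset.mem_insert_self i u))
    congr 1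
    rw [Finset.sum_image ?hinj, Finset.mul_sum]
    case hinj =>
      intro u hu v hv huv
      rw [Finset.mem_coe, Finset.mem_powersetCard] at hu hv
      have hiu : i ∉ u := fun h => hi (hu.1 h)
      have hiv : i ∉ v := fun h => hi (hv.1 h)
      rw [← Finset.erase_insert hiu, ← Finset.erase_insert hiv, huv]
    apply Finset.sum_congr rfl
    intro u hu
    rw [Finset.mem_powersetCard] at hu
    rw [Finset.prod_insert (fun h => hi (hu.1 h))]

lemma esymmOn_eq_multiset_esymm {n : ℕ} (S : Finset (Fin n)) (k : ℕ) (lam : Fin n → ℝ) :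
    esymmOn S (k : ℤ) lam = (S.val.map lam).esymm k := by
  rw [esymmOn_coe, Finset.esymm_map_val]

lemma esymmOn_eq_zero_of_card_lt {n : ℕ} {S : Finset (Fin n)} {k : ℕ} (h : S.card < k)
    (lam : Fin n → ℝ) : esymmOn S (k : ℤ) lam = 0 := by
  rw [esymmOn_coe, Finset.powersetCard_eq_empty.mpr h, Finset.sum_empty]

theorem newton_type_identity {n : ℕ} (l : ℕ) (hl : 2 ≤ l) (hln : l ≤ n)
    (lam : Fin n → ℝ) (hG : GammaCone l lam) (p q : Fin n) (hpq : p ≠ q) :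
    esymmOn ({p}ᶜ : Finset (Fin n)) ((l : ℤ) - 1) lam *
          esymmOn ({q}ᶜ : Finset (Fin n)) ((l : ℤ) - 1) lam
        - esymm (l : ℤ) lam * esymmOn ({p, q}ᶜ : Finset (Fin n)) ((l : ℤ) - 2) lam
      = (esymmOn ({p, q}ᶜ : Finset (Fin n)) ((l : ℤ) - 1) lam) ^ 2
        - esymmOn ({p, q}ᶜ : Finset (Fin n)) (l : ℤ) lam *
            esymmOn ({p, q}ᶜ : Finset (Fin n)) ((l : ℤ) - 2) lam
    ∧ 0 ≤ (esymmOn ({p, q}ᶜ : Finset (Fin n)) ((l : ℤ) - 1) lam) ^ 2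
        - esymmOn ({p, q}ᶜ : Finset (Fin n)) (l : ℤ) lam *
            esymmOn ({p, q}ᶜ : Finset (Fin n)) ((l : ℤ) - 2) lam := by
  set T : Finset (Fin n) := ({p, q}ᶜ : Finset (Fin n)) with hT
  have hpT : p ∉ T := by simp [hT]
  have hqT : q ∉ T := by simp [hT]
  have hins_q : insert q T = ({p}ᶜ : Finset (Fin n)) := by
    ext x
    simp only [hT, Finset.mem_insert, Finset.mem_compl, Finset.mem_singleton]
    rcases eq_or_ne x p with rfl | h <;> rcases eq_or_ne x q with rfl | h2 <;> simp_all
  have hins_p : insert p T = ({q}ᶜ : Finset (Fin n)) := by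
    ext x
    simp only [hT, Finset.mem_insert, Finset.mem_compl, Finset.mem_singleton]
    rcases eq_or_ne x p with rfl | h <;> rcases eq_or_ne x q with rfl | h2 <;> simp_all
  have hq_pc : q ∉ ({p}ᶜ : Finset (Fin n))ᶜ := by simp [hpq.symm]
  have hp_pc : p ∈ ({p} : Finset (Fin n)) := Finset.mem_singleton_self p
  have hp_not_pc : p ∉ ({p}ᶜ : Finset (Fin n)) := by simp
  have hins_univ : insert p ({p}ᶜ : Finset (Fin n)) = Finset.univ := by
    ext x
    simp [em]
  -- expansions
  have h1 : esymmOn ({p}ᶜ : Finset (Fin n)) ((l:ℤ) - 1) lam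
      = esymmOn T ((l:ℤ)-1) lam + lam q * esymmOn T ((l:ℤ)-2) lam := by
    have := esymmOn_insert hqT ((l:ℤ)-1) lam
    rw [hins_q, show (l:ℤ) - 1 - 1 = (l:ℤ) - 2 by ring] at this
    exact this
  have h2 : esymmOn ({q}ᶜ : Finset (Fin n)) ((l:ℤ) - 1) lam
      = esymmOn T ((l:ℤ)-1) lam + lam p * esymmOn T ((l:ℤ)-2) lam := by
    have := esymmOn_insert hpT ((l:ℤ)-1) lam
    rw [hins_p, show (l:ℤ) - 1 - 1 = (l:ℤ) - 2 by ring] at this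
    exact this
  have h3 : esymm (l:ℤ) lam
      = (esymmOn T (l:ℤ) lam + lam q * esymmOn T ((l:ℤ)-1) lam)
        + lam p * (esymmOn T ((l:ℤ)-1) lam + lam q * esymmOn T ((l:ℤ)-2) lam) := by
    have e1 := esymmOn_insert hp_not_pc ((l:ℤ)) lam
    rw [hins_univ] at e1
    have e2 := esymmOn_insert hqT ((l:ℤ)) lam
    rw [hins_q] at e2
    have e3 : esymmOn ({p}ᶜ : Finset (Fin n)) ((l:ℤ)-1) lam
        = esymmOn T ((l:ℤ)-1) lam + lam q * esymmOn T ((l:ℤ)-2) lam := h1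
    rw [esymm, e1, e2, e3]
  constructor
  · rw [h1, h2, h3]
    ring
  · -- nonnegativity
    obtain ⟨k, rfl⟩ : ∃ k : ℕ, l = k + 2 := ⟨l - 2, by omega⟩
    have c0 : ((k + 2 : ℕ) : ℤ) = ((k+2 : ℕ) : ℤ) := rfl
    have c1 : ((k + 2 : ℕ) : ℤ) - 1 = ((k+1 : ℕ) : ℤ) := by push_cast; ring
    have c2 : ((k + 2 : ℕ) : ℤ) - 2 = ((k : ℕ) : ℤ) := by push_cast; ring
    have hcardT : T.card = n - 2 := by
      rw [hT, Finset.card_compl, Finset.card_insert_of_notMem (by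
        simpa [Finset.mem_singleton] using hpq), Finset.card_singleton, Fintype.card_fin]
    by_cases hbig : k + 2 ≤ n - 2
    · have hcard' : k + 1 + 1 ≤ Multiset.card (T.val.map lam) := by
        rw [Multiset.card_map]
        have : Multiset.card T.val = T.card := rfl
        omega
      have hnewton := multiset_newton (T.val.map lam) k hcard'
      rw [c1, c2, esymmOn_eq_multiset_esymm, esymmOn_eq_multiset_esymm,
        esymmOn_eq_multiset_esymm]
      have : (k : ℕ) + 2 = k + 2 := rfl
      rw [sub_nonneg]
      exact le_of_eq_of_le (by rw [mul_comm]) hnewton |>.trans_eq rfl |> fun h => h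
    · have h0 : esymmOn T ((k+2:ℕ) : ℤ) lam = 0 :=
        esymmOn_eq_zero_of_card_lt (by omega) lam
      rw [h0, zero_mul, sub_zero]
      exact sq_nonneg _
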